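/- Let V be a finite set, G ⊆ V nonempty, M ⊆ N ⊆ V, and x ∈ G with x ∉ N. Then for g(M) = |G \ M| / |G ∪ M| in ℚ one has the exact identity g(M ∪ {x}) − g(M) − (g(N ∪ {x}) − g(N)) = −1/|G ∪ M| + 1/|G ∪ N|, and this quantity is ≤ 0. -/

import Mathlib

/-- Case (i) of the supermodularity proof for the Jaccard index of
mispredictions: for `x ∈ G`, `x ∉ N`, the difference of marginal gains equals
`-1/|G ∪ M| + 1/|G ∪ N|`, which is `≤ 0`. -/
theorem jaccard_misprediction_case_mem {α : Type*} [DecidableEq α]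
    (V G M N : Finset α) (hGV : G ⊆ V) (hG : G.Nonempty)
    (hMN : M ⊆ N) (hNV : N ⊆ V)
    (g : Finset α → ℚ)
    (hg : ∀ S : Finset α, g S = ((G \ S).card : ℚ) / ((G ∪ S).card : ℚ))
    (x : α) (hxG : x ∈ G) (hxN : x ∉ N) :
    g (M ∪ {x}) - g M - (g (N ∪ {x}) - g N) =
      -1 / ((G ∪ M).card : ℚ) + 1 / ((G ∪ N).card : ℚ) ∧
    -1 / ((G ∪ M).card : ℚ) + 1 / ((G ∪ N).card : ℚ) ≤ 0 := by
  have key : ∀ S : Finset α, x ∉ S →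
      g (S ∪ {x}) - g S = -1 / ((G ∪ S).card : ℚ) := by
    intro S hxS
    have hu : G ∪ (S ∪ {x}) = G ∪ S := by
      ext a
      simp only [Finset.mem_union, Finset.mem_singleton]
      constructor
      · rintro (h | h | rfl) <;> [exact Or.inl h; exact Or.inr h; exact Or.inl hxG]
      · rintro (h | h) <;> [exact Or.inl h; exact Or.inr (Or.inl h)]
    have hsd : G \ (S ∪ {x}) = (G \ S).erase x := by
      ext a
      simp only [Finset.mem_sdiff, Finset.mem_union, Finset.mem_singleton,
        Finset.mem_erase]
      tauto
    have hxGS : x ∈ G \ S := Finset.mem_sdiff.mpr ⟨hxG, hxS⟩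
    have hcard : ((G \ (S ∪ {x})).card : ℚ) = ((G \ S).card : ℚ) - 1 := by
      rw [hsd, Finset.card_erase_of_mem hxGS]
      have : 1 ≤ (G \ S).card := Finset.card_pos.mpr ⟨x, hxGS⟩
      push_cast [this]
      ring
    have hpos : (0 : ℚ) < ((G ∪ S).card : ℚ) := by
      exact_mod_cast Finset.card_pos.mpr (hG.mono Finset.subset_union_left)
    rw [hg, hg, hu, hcard]
    field_simp
    ring
  have hxM : x ∉ M := fun h => hxN (hMN h)
  have h1 := key M hxM
  have h2 := key N hxN
  have hposM : (0 : ℚ) < ((G ∪ M).card : ℚ) := by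
    exact_mod_cast Finset.card_pos.mpr (hG.mono Finset.subset_union_left)
  have hposN : (0 : ℚ) < ((G ∪ N).card : ℚ) := by
    exact_mod_cast Finset.card_pos.mpr (hG.mono Finset.subset_union_left)
  have hle : ((G ∪ M).card : ℚ) ≤ ((G ∪ N).card : ℚ) := by
    exact_mod_cast Finset.card_le_card (Finset.union_subset_union_right hMN)
  constructor
  · rw [h1, h2]; ring
  · have : 1 / ((G ∪ N).card : ℚ) ≤ 1 / ((G ∪ M).card : ℚ) :=
      one_div_le_one_div_of_le hposM hle
    have hneg : -1 / ((G ∪ M).card : ℚ) = -(1 / ((G ∪ M).card : ℚ)) := by ring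
    linarith
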